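/- arXiv:2603.01290 — 2 statements merged into one kernel-verified Lean document; each statement's English description precedes it below -/
import Mathlib

section
/- Let σ > 0 and μ₁ < μ₂ be real numbers. For every Borel-measurable set A ⊆ ℝ, the total error of the decision rule that declares N(μ₁, σ²) on A, namely N(μ₁, σ²)(Aᶜ) + N(μ₂, σ²)(A), is at least 2·Φ((μ₁ − μ₂)/(2σ)). In particular, no measurable decision rule distinguishing the two equal-variance Gaussians achieves total error smaller than that of the midpoint threshold test. -/
open MeasureTheory ProbabilityTheory Set
open scoped NNReal ENNReal

/-- The standard normal cumulative distribution function `Φ`. -/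
noncomputable def stdNormalCDF (t : ℝ) : ℝ :=
    (gaussianReal 0 1 (Iic t)).toReal

lemma gaussianPDFReal_mono_of_sq (μ μ' : ℝ) {v : ℝ≥0} (hv : v ≠ 0) (x : ℝ)
    (h : (x - μ') ^ 2 ≤ (x - μ) ^ 2) :
    gaussianPDFReal μ v x ≤ gaussianPDFReal μ' v x := by
  have hv0 : (0:ℝ) < v := by positivity
  rw [gaussianPDFReal, gaussianPDFReal]
  gcongr

lemma gauss_mono_on (μ μ' : ℝ) {v : ℝ≥0} (hv : v ≠ 0) {s : Set ℝ}
    (h : ∀ x ∈ s, gaussianPDFReal μ v x ≤ gaussianPDFReal μ' v x) :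
    gaussianReal μ v s ≤ gaussianReal μ' v s := by
  rw [gaussianReal_apply _ hv, gaussianReal_apply _ hv]
  exact setLIntegral_mono (measurable_gaussianPDF _ _)
    fun x hx => ENNReal.ofReal_le_ofReal (h x hx)

lemma gaussianReal_eq_map (μ σ : ℝ) (hσ : 0 < σ) :
    gaussianReal μ (σ.toNNReal ^ 2) = (gaussianReal 0 1).map (fun x => σ * x + μ) := by
  have h1 : (gaussianReal 0 1).map (σ * ·) = gaussianReal 0 (σ.toNNReal ^ 2) := by
    rw [gaussianReal_map_const_mul]
    congr 1
    · ring
    · ext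
      simp [sq, Real.coe_toNNReal _ hσ.le]
  have h2 : (fun x : ℝ => σ * x + μ) = (· + μ) ∘ (σ * ·) := rfl
  rw [h2, ← Measure.map_map (measurable_add_const μ) (measurable_const_mul σ), h1,
    gaussianReal_map_add_const, zero_add]

lemma gauss_Iic (μ σ t : ℝ) (hσ : 0 < σ) :
    gaussianReal μ (σ.toNNReal ^ 2) (Iic t) = gaussianReal 0 1 (Iic ((t - μ) / σ)) := by
  rw [gaussianReal_eq_map μ σ hσ,
    Measure.map_apply (by fun_prop) measurableSet_Iic]
  congr 1
  ext x
  simp only [mem_preimage, mem_Iic]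
  rw [le_div_iff₀ hσ]
  constructor <;> intro <;> nlinarith

lemma gauss_Ici (μ σ t : ℝ) (hσ : 0 < σ) :
    gaussianReal μ (σ.toNNReal ^ 2) (Ici t) = gaussianReal 0 1 (Iic ((μ - t) / σ)) := by
  have hneg : (gaussianReal 0 1).map ((-1 : ℝ) * ·) = gaussianReal 0 1 := by
    rw [gaussianReal_map_const_mul]
    norm_num
  rw [gaussianReal_eq_map μ σ hσ,
    Measure.map_apply (by fun_prop) measurableSet_Ici]
  have hpre : (fun x : ℝ => σ * x + μ) ⁻¹' Ici t = Ici ((t - μ) / σ) := by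
    ext x
    simp only [mem_preimage, mem_Ici]
    rw [div_le_iff₀ hσ]
    constructor <;> intro <;> nlinarith
  rw [hpre]
  have hsym : ∀ c : ℝ, gaussianReal 0 1 (Ici c) = gaussianReal 0 1 (Iic (-c)) := by
    intro c
    conv_lhs => rw [← hneg]
    rw [Measure.map_apply (by fun_prop) measurableSet_Ici]
    congr 1
    ext x
    simp only [mem_preimage, mem_Ici, mem_Iic]
    constructor <;> intro <;> linarith
  rw [hsym]
  congr 1
  rw [← neg_div, neg_sub]

/-- For `σ > 0`, `μ₁ < μ₂`, and any Borel-measurable decision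
region `A ⊆ ℝ` (on which the sample is declared to come from `N(μ₁, σ²)`), the
total error `N(μ₁, σ²)(Aᶜ) + N(μ₂, σ²)(A)` is at least
`2·Φ((μ₁ − μ₂)/(2σ))`: no measurable decision rule beats the midpoint
threshold test. -/
theorem no_rule_beats_midpoint_threshold (σ μ₁ μ₂ : ℝ) (hσ : 0 < σ)
    (hμ : μ₁ < μ₂) (A : Set ℝ) (hA : MeasurableSet A) :
    2 * stdNormalCDF ((μ₁ - μ₂) / (2 * σ)) ≤
      (gaussianReal μ₁ (σ.toNNReal ^ 2) Aᶜ).toReal +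
      (gaussianReal μ₂ (σ.toNNReal ^ 2) A).toReal := by
  set v : ℝ≥0 := σ.toNNReal ^ 2 with hvdef
  have hv : v ≠ 0 := by
    apply pow_ne_zero
    simp only [ne_eq, Real.toNNReal_eq_zero, not_le]
    exact hσ
  set m : ℝ := (μ₁ + μ₂) / 2 with hm
  set N₁ := gaussianReal μ₁ v with hN1
  set N₂ := gaussianReal μ₂ v with hN2
  haveI noatoms : NullSingletonClass N₂ :=
    ⟨fun x => (gaussianReal_absolutelyContinuous μ₂ hv) (measure_singleton x)⟩
  -- pointwise density comparisons
  have hle₁ : ∀ x ∈ Iio m ∩ Aᶜ, gaussianPDFReal μ₂ v x ≤ gaussianPDFReal μ₁ v x := by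
    intro x hx
    apply gaussianPDFReal_mono_of_sq _ _ hv
    have : x < m := hx.1
    rw [hm] at this
    nlinarith
  have hle₂ : ∀ x ∈ Ici m ∩ A, gaussianPDFReal μ₁ v x ≤ gaussianPDFReal μ₂ v x := by
    intro x hx
    apply gaussianPDFReal_mono_of_sq _ _ hv
    have : m ≤ x := hx.1
    rw [hm] at this
    nlinarith
  -- splitting along m
  have hsplit : ∀ (N : Measure ℝ) (B : Set ℝ), MeasurableSet B →
      N B = N (Iio m ∩ B) + N (Ici m ∩ B) := by
    intro N B hB
    rw [← measure_union ((Iio_disjoint_Ici (le_refl m)).mono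
      inter_subset_left inter_subset_left) (measurableSet_Ici.inter hB),
      ← union_inter_distrib_right, Iio_union_Ici, univ_inter]
  haveI : IsProbabilityMeasure N₁ := by rw [hN1]; infer_instance
  haveI : IsProbabilityMeasure N₂ := by rw [hN2]; infer_instance
  have key : N₂ (Iio m) + N₁ (Ici m) ≤ N₁ Aᶜ + N₂ A := by
    have e2 : N₂ (Iio m) ≤ N₂ (Iio m ∩ A) + N₁ (Iio m ∩ Aᶜ) := by
      rw [← measure_inter_add_diff (Iio m) hA, diff_eq]
      refine add_le_add le_rfl ?_
      exact gauss_mono_on _ _ hv hle₁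
    have e3 : N₁ (Ici m) ≤ N₂ (Ici m ∩ A) + N₁ (Ici m ∩ Aᶜ) := by
      rw [← measure_inter_add_diff (Ici m) hA, diff_eq]
      refine add_le_add ?_ le_rfl
      exact gauss_mono_on _ _ hv hle₂
    calc N₂ (Iio m) + N₁ (Ici m)
        ≤ (N₂ (Iio m ∩ A) + N₁ (Iio m ∩ Aᶜ)) + (N₂ (Ici m ∩ A) + N₁ (Ici m ∩ Aᶜ)) :=
          add_le_add e2 e3
      _ = (N₂ (Iio m ∩ A) + N₂ (Ici m ∩ A)) + (N₁ (Iio m ∩ Aᶜ) + N₁ (Ici m ∩ Aᶜ)) := by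
          rw [add_add_add_comm]
      _ = N₂ A + N₁ Aᶜ := by rw [← hsplit N₂ A hA, ← hsplit N₁ Aᶜ hA.compl]
      _ = N₁ Aᶜ + N₂ A := add_comm _ _
  have hv2' : N₂ (Iio m) = gaussianReal 0 1 (Iic ((μ₁ - μ₂) / (2 * σ))) := by
    rw [measure_congr Iio_ae_eq_Iic, hN2, hvdef, gauss_Iic μ₂ σ m hσ]
    congr 1
    rw [hm]
    field_simp
    ring_nf
  have hv1' : N₁ (Ici m) = gaussianReal 0 1 (Iic ((μ₁ - μ₂) / (2 * σ))) := by
    rw [hN1, hvdef, gauss_Ici μ₁ σ m hσ]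
    congr 1
    rw [hm]
    field_simp
    ring_nf
  have h2Φ : 2 * stdNormalCDF ((μ₁ - μ₂) / (2 * σ)) = (N₂ (Iio m) + N₁ (Ici m)).toReal := by
    rw [ENNReal.toReal_add (measure_ne_top _ _) (measure_ne_top _ _), hv2', hv1', stdNormalCDF]
    ring
  rw [h2Φ]
  calc (N₂ (Iio m) + N₁ (Ici m)).toReal
      ≤ (N₁ Aᶜ + N₂ A).toReal :=
        ENNReal.toReal_mono (by finiteness) key
    _ = (N₁ Aᶜ).toReal + (N₂ A).toReal :=
        ENNReal.toReal_add (measure_ne_top _ _) (measure_ne_top _ _)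
end

section
/- For every threshold θ ∈ ℝ, the total error of the threshold test distinguishing the emission distribution N(2, 1.5²) of a rival in L_harvest with Active Aero from the emission distribution N(4, 1.5²) of a rival in ERS state H without Active Aero, namely N(4, 1.5²)({x : x ≤ θ}) + N(2, 1.5²)({x : x > θ}), is at least 1/2. Hence these two hypotheses cannot be reliably separated by any scalar threshold on Δv_trap. -/
open MeasureTheory ProbabilityTheory Set Real
open scoped NNReal ENNReal

noncomputable def gpdf (m x : ℝ) : ℝ :=
  (Real.sqrt (2 * Real.pi * (9/4)))⁻¹ * Real.exp (-(x - m)^2 / (9/2))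

lemma gpdf_eq (m : ℝ) : gaussianPDFReal m ((3/2 : ℝ≥0)^2) = gpdf m := by
  funext x
  simp only [gaussianPDFReal, gpdf]
  norm_num [NNReal.coe_pow]

lemma gpdf_nonneg (m x : ℝ) : 0 ≤ gpdf m x := by
  rw [← gpdf_eq]; exact gaussianPDFReal_nonneg _ _ _

lemma gpdf_integrable (m : ℝ) : Integrable (gpdf m) := by
  rw [← gpdf_eq]; exact integrable_gaussianPDFReal _ _

lemma gpdf_integral (m : ℝ) : ∫ x, gpdf m x = 1 := by
  rw [← gpdf_eq]
  exact integral_gaussianPDFReal_eq_one m (by norm_num)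

/-- shift-reflection of a set integral -/
lemma integral_Iic_comp_sub (f : ℝ → ℝ) (a c : ℝ) :
    ∫ x in Iic c, f (a - x) = ∫ x in Ioi (a - c), f x := by
  have h1 : ∫ x in Iic c, f (a - x) = ∫ x in Ioi (-c), f (a + x) := by
    simpa [sub_eq_add_neg] using integral_comp_neg_Iic c (fun y => f (a + y))
  rw [h1]
  have hemb : MeasurableEmbedding (fun x : ℝ => x + a) :=
    (Homeomorph.addRight a).isClosedEmbedding.measurableEmbedding
  have hmap := hemb.setIntegral_map (μ := volume) f (Ioi (a - c))
  rw [map_add_right_eq_self volume a] at hmap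
  have hpre : (fun x : ℝ => x + a) ⁻¹' Ioi (a - c) = Ioi (-c) := by
    ext x; simp only [mem_preimage, mem_Ioi]; constructor <;> intro h <;> linarith
  rw [hmap, hpre]
  simp [add_comm]

lemma gpdf_reflect (m a x : ℝ) : gpdf m (2 * m - x) = gpdf m x := by
  simp only [gpdf]
  ring_nf

/-- partition of the total mass -/
lemma gpdf_split (m a : ℝ) : (∫ x in Iic a, gpdf m x) + ∫ x in Ioi a, gpdf m x = 1 := by
  rw [← setIntegral_union (Iic_disjoint_Ioi le_rfl) measurableSet_Ioi
    ((gpdf_integrable m).integrableOn) ((gpdf_integrable m).integrableOn),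
    Iic_union_Ioi, Measure.restrict_univ, gpdf_integral]

lemma gpdf_Iic_reflect (m a : ℝ) :
    ∫ x in Iic (m - a), gpdf m x = ∫ x in Ioi (m + a), gpdf m x := by
  have : ∀ x, gpdf m x = gpdf m (2 * m - x) := fun x => (gpdf_reflect m a x).symm
  calc ∫ x in Iic (m - a), gpdf m x = ∫ x in Iic (m - a), gpdf m (2 * m - x) := by
        exact setIntegral_congr_fun measurableSet_Iic fun x _ => this x
    _ = ∫ x in Ioi (2 * m - (m - a)), gpdf m x := integral_Iic_comp_sub _ _ _
    _ = ∫ x in Ioi (m + a), gpdf m x := by ring_nf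

lemma gpdf_half (m : ℝ) : ∫ x in Iic m, gpdf m x = 1 / 2 := by
  have h1 := gpdf_Iic_reflect m 0
  have h2 := gpdf_split m m
  simp only [sub_zero, add_zero] at h1
  linarith

/-- cross reflection: the mean-4 density integrated on `Iic 3` equals the
mean-2 density integrated on `Ioi 3`. -/
lemma gpdf_cross : ∫ x in Iic (3:ℝ), gpdf 4 x = ∫ x in Ioi (3:ℝ), gpdf 2 x := by
  have hpt : ∀ x, gpdf 4 x = gpdf 2 (6 - x) := by
    intro x; simp only [gpdf]; ring_nf
  calc ∫ x in Iic (3:ℝ), gpdf 4 x = ∫ x in Iic (3:ℝ), gpdf 2 (6 - x) :=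
        setIntegral_congr_fun measurableSet_Iic fun x _ => hpt x
    _ = ∫ x in Ioi ((6:ℝ) - 3), gpdf 2 x := integral_Iic_comp_sub _ _ _
    _ = ∫ x in Ioi (3:ℝ), gpdf 2 x := by norm_num

/-- the key numeric estimate -/
lemma gpdf_Ioc_le : ∫ x in Ioc (2:ℝ) 3, gpdf 2 x ≤ 1 / 4 := by
  have hpi := Real.pi_gt_d6
  have hpoly : ∀ x ∈ Ioc (2:ℝ) 3, gpdf 2 x ≤
      (Real.sqrt (2 * Real.pi * (9/4)))⁻¹ *
        (1 - (x-2)^2 * (2/9) + (x-2)^4 * (4/81)) := by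
    intro x hx
    have ht : (0:ℝ) ≤ (x-2)^2 / (9/2) := by positivity
    set t : ℝ := (x-2)^2 / (9/2) with htdef
    have h1 : Real.exp (-(x-2)^2 / (9/2)) ≤ 1 / (1 + t) := by
      rw [neg_div, Real.exp_neg, ← htdef]
      rw [div_eq_inv_mul, mul_one]
      exact inv_anti₀ (by linarith) (by linarith [Real.add_one_le_exp t])
    have h2 : 1 / (1 + t) ≤ 1 - t + t^2 := by
      rw [div_le_iff₀ (by linarith : (0:ℝ) < 1 + t)]
      nlinarith [sq_nonneg t, pow_nonneg ht 3]
    have h3 : 1 - t + t^2 = 1 - (x-2)^2 * (2/9) + (x-2)^4 * (4/81) := by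
      simp only [htdef]; ring
    have hc : (0:ℝ) ≤ (Real.sqrt (2 * Real.pi * (9/4)))⁻¹ := by positivity
    calc gpdf 2 x = (Real.sqrt (2 * Real.pi * (9/4)))⁻¹ * Real.exp (-(x-2)^2 / (9/2)) := rfl
      _ ≤ (Real.sqrt (2 * Real.pi * (9/4)))⁻¹ * (1 - (x-2)^2 * (2/9) + (x-2)^4 * (4/81)) := by
          rw [← h3]; exact mul_le_mul_of_nonneg_left (h1.trans h2) hc
  have hcont : Continuous fun x : ℝ => (Real.sqrt (2 * Real.pi * (9/4)))⁻¹ *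
      (1 - (x-2)^2 * (2/9) + (x-2)^4 * (4/81)) := by fun_prop
  have hmono := setIntegral_mono_on ((gpdf_integrable 2).integrableOn)
    (hcont.integrableOn_Ioc) measurableSet_Ioc hpoly
  refine hmono.trans ?_
  have hval : ∫ x in Ioc (2:ℝ) 3, (Real.sqrt (2 * Real.pi * (9/4)))⁻¹ *
      (1 - (x-2)^2 * (2/9) + (x-2)^4 * (4/81)) =
      (Real.sqrt (2 * Real.pi * (9/4)))⁻¹ * (379/405) := by
    rw [← intervalIntegral.integral_of_le (by norm_num : (2:ℝ) ≤ 3)]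
    rw [intervalIntegral.integral_const_mul]
    congr 1
    have hi1 : IntervalIntegrable (fun x : ℝ => 1 - (x-2)^2 * (2/9)) volume 2 3 := by
      apply Continuous.intervalIntegrable; fun_prop
    have hi2 : IntervalIntegrable (fun x : ℝ => (x-2)^4 * (4/81)) volume 2 3 := by
      apply Continuous.intervalIntegrable; fun_prop
    have hi3 : IntervalIntegrable (fun x : ℝ => (1:ℝ)) volume 2 3 := by
      apply Continuous.intervalIntegrable; fun_prop
    have hi4 : IntervalIntegrable (fun x : ℝ => (x-2)^2 * (2/9)) volume 2 3 := by
      apply Continuous.intervalIntegrable; fun_prop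
    rw [intervalIntegral.integral_add hi1 hi2, intervalIntegral.integral_sub hi3 hi4,
      intervalIntegral.integral_mul_const, intervalIntegral.integral_mul_const,
      intervalIntegral.integral_comp_sub_right (fun x => x^2) 2,
      intervalIntegral.integral_comp_sub_right (fun x => x^4) 2,
      integral_pow, integral_pow]
    norm_num
  rw [hval]
  have hs : (1516/405 : ℝ) ≤ Real.sqrt (2 * Real.pi * (9/4)) := by
    rw [show (1516/405:ℝ) = Real.sqrt ((1516/405)^2) by
      rw [Real.sqrt_sq (by norm_num)]]
    apply Real.sqrt_le_sqrt
    nlinarith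
  have hpos : (0:ℝ) < Real.sqrt (2 * Real.pi * (9/4)) := by positivity
  rw [inv_mul_le_iff₀ hpos]
  calc (379/405 : ℝ) = (1516/405) * (1/4) := by norm_num
    _ ≤ Real.sqrt (2 * Real.pi * (9/4)) * (1/4) :=
        mul_le_mul_of_nonneg_right hs (by norm_num)

lemma gpdf_cmp_le {x : ℝ} (hx : x ≤ 3) : gpdf 4 x ≤ gpdf 2 x := by
  simp only [gpdf]
  apply mul_le_mul_of_nonneg_left _ (by positivity)
  apply Real.exp_le_exp.mpr
  rw [div_le_div_iff₀ (by norm_num) (by norm_num)]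
  nlinarith

lemma gpdf_cmp_ge {x : ℝ} (hx : 3 ≤ x) : gpdf 2 x ≤ gpdf 4 x := by
  simp only [gpdf]
  apply mul_le_mul_of_nonneg_left _ (by positivity)
  apply Real.exp_le_exp.mpr
  rw [div_le_div_iff₀ (by norm_num) (by norm_num)]
  nlinarith

lemma key (θ : ℝ) : (∫ x in Iic θ, gpdf 2 x) - (∫ x in Iic θ, gpdf 4 x) ≤ 1/2 := by
  set f : ℝ → ℝ := fun x => gpdf 2 x - gpdf 4 x with hf
  have hfi : Integrable f := (gpdf_integrable 2).sub (gpdf_integrable 4)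
  have hD : ∀ c : ℝ, ∫ x in Iic c, f x =
      (∫ x in Iic c, gpdf 2 x) - ∫ x in Iic c, gpdf 4 x := fun c =>
    integral_sub ((gpdf_integrable 2).integrableOn) ((gpdf_integrable 4).integrableOn)
  have hmax : ∫ x in Iic θ, f x ≤ ∫ x in Iic 3, f x := by
    rcases le_total θ 3 with h | h
    · have hsplit : ∫ x in Iic (3:ℝ), f x =
          (∫ x in Iic θ, f x) + ∫ x in Ioc θ 3, f x := by
        rw [← setIntegral_union ((Iic_disjoint_Ioi le_rfl).mono_right Ioc_subset_Ioi_self)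
          measurableSet_Ioc hfi.integrableOn hfi.integrableOn, Iic_union_Ioc_eq_Iic h]
      have hnn : 0 ≤ ∫ x in Ioc θ 3, f x :=
        setIntegral_nonneg measurableSet_Ioc fun x hx => sub_nonneg.2 (gpdf_cmp_le hx.2)
      linarith
    · have hsplit : ∫ x in Iic θ, f x =
          (∫ x in Iic (3:ℝ), f x) + ∫ x in Ioc 3 θ, f x := by
        rw [← setIntegral_union ((Iic_disjoint_Ioi le_rfl).mono_right Ioc_subset_Ioi_self)
          measurableSet_Ioc hfi.integrableOn hfi.integrableOn, Iic_union_Ioc_eq_Iic h]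
      have hnp : ∫ x in Ioc 3 θ, f x ≤ 0 :=
        setIntegral_nonpos measurableSet_Ioc fun x hx => sub_nonpos.2 (gpdf_cmp_ge hx.1.le)
      linarith
  have h3 : ∫ x in Iic (3:ℝ), gpdf 2 x =
      1/2 + ∫ x in Ioc (2:ℝ) 3, gpdf 2 x := by
    have hu := setIntegral_union (μ := volume) (f := gpdf 2) (s := Iic (2:ℝ)) (t := Ioc (2:ℝ) 3)
      ((Iic_disjoint_Ioi le_rfl).mono_right Ioc_subset_Ioi_self)
      measurableSet_Ioc ((gpdf_integrable 2).integrableOn) ((gpdf_integrable 2).integrableOn)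
    rw [Iic_union_Ioc_eq_Iic (by norm_num : (2:ℝ) ≤ 3)] at hu
    rw [hu, gpdf_half]
  have h4 : ∫ x in Iic (3:ℝ), gpdf 4 x = 1 - ∫ x in Iic (3:ℝ), gpdf 2 x := by
    rw [gpdf_cross]; linarith [gpdf_split 2 3]
  have hq := gpdf_Ioc_le
  rw [hD θ] at hmax
  rw [hD 3, h4, h3] at hmax
  linarith

/-- For every threshold `θ`, the total error of the threshold test
distinguishing the emission distribution `N(2, 1.5²)` (rival in `L_harvest`
with Active Aero) from `N(4, 1.5²)` (rival in ERS state `H` without Active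
Aero), namely `N(4, 1.5²)({x | x ≤ θ}) + N(2, 1.5²)({x | x > θ})`, is at least
`1/2`: these hypotheses cannot be reliably separated by any threshold on
`Δv_trap`. -/
theorem harvest_vs_high_total_error_ge_half (θ : ℝ) :
    (1 : ℝ≥0∞) / 2 ≤
      gaussianReal 4 ((3/2 : ℝ≥0)^2) {x : ℝ | x ≤ θ} +
      gaussianReal 2 ((3/2 : ℝ≥0)^2) {x : ℝ | θ < x} := by
  have hv : ((3/2 : ℝ≥0)^2) ≠ 0 := by norm_num
  have hs1 : {x : ℝ | x ≤ θ} = Iic θ := rfl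
  have hs2 : {x : ℝ | θ < x} = Ioi θ := rfl
  rw [hs1, hs2, gaussianReal_apply_eq_integral 4 hv, gaussianReal_apply_eq_integral 2 hv]
  simp only [gpdf_eq]
  have hn1 : 0 ≤ ∫ x in Iic θ, gpdf 4 x :=
    setIntegral_nonneg measurableSet_Iic fun x _ => gpdf_nonneg 4 x
  have hn2 : 0 ≤ ∫ x in Ioi θ, gpdf 2 x :=
    setIntegral_nonneg measurableSet_Ioi fun x _ => gpdf_nonneg 2 x
  rw [← ENNReal.ofReal_add hn1 hn2]
  have h12 : (1 : ℝ≥0∞) / 2 = ENNReal.ofReal (1/2) := by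
    rw [ENNReal.ofReal_div_of_pos (by norm_num), ENNReal.ofReal_one, ENNReal.ofReal_ofNat]
  rw [h12]
  apply ENNReal.ofReal_le_ofReal
  have hsplit := gpdf_split 2 θ
  have hkey := key θ
  linarith
end
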